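/- Let l ≥ 0 be an integer, let c_0 = 0 and c_1, …, c_l ≥ 0 be reals, and for κ > 0 let η(κ) > 0 be the unique solution of ∏_{k=0}^{l}(c_k + η) = κ. Define μ(κ) = (l+1)·η(κ) − ∑_{k=0}^{l} c_k·log(c_k + η(κ)). Then μ is differentiable on (0,∞) and κ·μ′(κ) = η(κ), i.e. dμ/d(log κ) = η. -/

import Mathlib

/-- With `c 0 = 0 ≤ c 1, …, c l` and `η : ℝ → ℝ` the solution of
`∏_{k=0}^{l}(c k + η κ) = κ` for `κ > 0`, the potential
`μ κ = (l+1)·η κ − ∑_{k=0}^{l} c k · log (c k + η κ)` is differentiable on `(0,∞)`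
with `κ · μ'(κ) = η κ`, i.e. `dμ/d(log κ) = η`. -/
theorem stmt_2 (l : ℕ) (c : ℕ → ℝ) (hc0 : c 0 = 0) (hc : ∀ k ≤ l, 0 ≤ c k)
    (η : ℝ → ℝ)
    (hη : ∀ κ : ℝ, 0 < κ →
      0 < η κ ∧ ∏ k ∈ Finset.range (l + 1), (c k + η κ) = κ) :
    ∀ κ : ℝ, 0 < κ →
      HasDerivAt
        (fun t => (l + 1 : ℝ) * η t -
          ∑ k ∈ Finset.range (l + 1), c k * Real.log (c k + η t))
        (η κ / κ) κ := by
  intro κ₀ hκ₀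
  obtain ⟨hy₀, hFy₀⟩ := hη κ₀ hκ₀
  set y₀ := η κ₀ with hy₀def
  set F : ℝ → ℝ := fun y => ∏ k ∈ Finset.range (l + 1), (c k + y) with hFdef
  have hck : ∀ k ∈ Finset.range (l + 1), 0 ≤ c k := by
    intro k hk
    exact hc k (Nat.lt_succ_iff.mp (Finset.mem_range.mp hk))
  have hposfac : ∀ y : ℝ, 0 < y → ∀ k ∈ Finset.range (l + 1), 0 < c k + y := by
    intro y hy k hk
    have := hck k hk
    linarith
  have hFpos : ∀ y : ℝ, 0 < y → 0 < F y := by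
    intro y hy
    exact Finset.prod_pos (hposfac y hy)
  have hFy₀' : F y₀ = κ₀ := hFy₀
  have hmono : StrictMonoOn F (Set.Ioi 0) := by
    intro a ha b hb hab
    apply Finset.prod_lt_prod_of_nonempty (hposfac a ha)
    · intro k _; linarith
    · exact Finset.nonempty_range_iff.mpr (Nat.succ_ne_zero l)
  -- continuity of η at κ₀
  have hcont : ContinuousAt η κ₀ := by
    rw [Metric.continuousAt_iff]
    intro ε hε
    set ε' := min ε (y₀ / 2) with hε'def
    have hε' : 0 < ε' := lt_min hε (by linarith)
    have hlo : 0 < y₀ - ε' := by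
      have : ε' ≤ y₀ / 2 := min_le_right _ _
      linarith
    have h1 : F (y₀ - ε') < κ₀ := by
      have := hmono hlo (Set.mem_Ioi.mpr hy₀) (by linarith)
      rwa [hFy₀'] at this
    have h2 : κ₀ < F (y₀ + ε') := by
      have := hmono (Set.mem_Ioi.mpr hy₀) (Set.mem_Ioi.mpr (by linarith : (0:ℝ) < y₀ + ε')) (by linarith)
      rwa [hFy₀'] at this
    have hδ : 0 < min (κ₀ - F (y₀ - ε')) (F (y₀ + ε') - κ₀) :=
      lt_min (by linarith) (by linarith)
    refine ⟨min (κ₀ - F (y₀ - ε')) (F (y₀ + ε') - κ₀), hδ, ?_⟩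
    intro x hx
    rw [Real.dist_eq] at hx ⊢
    have hx1 : F (y₀ - ε') < x := by
      have := abs_lt.mp hx
      have := min_le_left (κ₀ - F (y₀ - ε')) (F (y₀ + ε') - κ₀)
      linarith [(abs_lt.mp hx).1]
    have hx2 : x < F (y₀ + ε') := by
      have := min_le_right (κ₀ - F (y₀ - ε')) (F (y₀ + ε') - κ₀)
      linarith [(abs_lt.mp hx).2]
    have hxpos : 0 < x := lt_trans (hFpos _ hlo) hx1
    obtain ⟨hηx, hFηx⟩ := hη x hxpos
    have hFηx' : F (η x) = x := hFηx
    have hlt1 : y₀ - ε' < η x := by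
      by_contra h
      push_neg at h
      rcases eq_or_lt_of_le h with h' | h'
      · rw [← h', hFηx'] at hx1
        exact lt_irrefl _ hx1
      · have := hmono (Set.mem_Ioi.mpr hηx) (Set.mem_Ioi.mpr hlo) h'
        rw [hFηx'] at this
        linarith
    have hlt2 : η x < y₀ + ε' := by
      by_contra h
      push_neg at h
      rcases eq_or_lt_of_le h with h' | h'
      · rw [h', hFηx'] at hx2
        exact lt_irrefl _ hx2
      · have := hmono (Set.mem_Ioi.mpr (by linarith : (0:ℝ) < y₀ + ε')) (Set.mem_Ioi.mpr hηx) h'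
        rw [hFηx'] at this
        linarith
    have : |η x - y₀| < ε' := abs_lt.mpr ⟨by linarith, by linarith⟩
    exact lt_of_lt_of_le this (min_le_left _ _)
  -- derivative of F at y₀
  set D : ℝ := ∑ j ∈ Finset.range (l + 1), ∏ k ∈ (Finset.range (l + 1)).erase j, (c k + y₀)
    with hDdef
  have hFd : HasDerivAt F D y₀ := by
    have h := HasDerivAt.fun_finsetProd (u := Finset.range (l + 1))
      (f := fun k y => c k + y) (f' := fun _ => (1 : ℝ)) (x := y₀)
      (fun k _ => (hasDerivAt_id y₀).const_add (c k))
    simpa using h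
  set S : ℝ := ∑ j ∈ Finset.range (l + 1), (c j + y₀)⁻¹ with hSdef
  have hfac : ∀ j ∈ Finset.range (l + 1), (0:ℝ) < c j + y₀ := hposfac y₀ hy₀
  have hDeq : D = κ₀ * S := by
    rw [hDdef, hSdef, Finset.mul_sum]
    apply Finset.sum_congr rfl
    intro j hj
    have hmul := Finset.mul_prod_erase (Finset.range (l + 1)) (fun k => c k + y₀) hj
    have hne : c j + y₀ ≠ 0 := ne_of_gt (hfac j hj)
    have : ∏ k ∈ (Finset.range (l + 1)).erase j, (c k + y₀) = κ₀ / (c j + y₀) := by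
      rw [eq_div_iff hne, mul_comm, hmul, hFy₀]
    rw [this]
    field_simp
  have hSpos : 0 < S := by
    apply Finset.sum_pos
    · intro j hj; exact inv_pos.mpr (hfac j hj)
    · exact Finset.nonempty_range_iff.mpr (Nat.succ_ne_zero l)
  have hDpos : 0 < D := by rw [hDeq]; positivity
  -- derivative of η
  have hηd : HasDerivAt η D⁻¹ κ₀ := by
    apply HasDerivAt.of_local_left_inverse hcont hFd (ne_of_gt hDpos)
    filter_upwards [Ioi_mem_nhds hκ₀] with x hx
    exact (hη x hx).2
  -- derivative of μ
  have hsum : HasDerivAt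
      (fun t => ∑ k ∈ Finset.range (l + 1), c k * Real.log (c k + η t))
      (∑ k ∈ Finset.range (l + 1), c k * (D⁻¹ / (c k + y₀))) κ₀ := by
    apply HasDerivAt.fun_sum
    intro k hk
    exact ((hηd.const_add (c k)).log (ne_of_gt (hfac k hk))).const_mul (c k)
  have hμ := ((hηd.const_mul ((l : ℝ) + 1)).sub hsum)
  refine hμ.congr_deriv ?_
  -- algebra
  have hsum2 : ∑ k ∈ Finset.range (l + 1), c k * (D⁻¹ / (c k + y₀))
      = D⁻¹ * ((l + 1 : ℝ) - y₀ * S) := by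
    have : ∀ k ∈ Finset.range (l + 1),
        c k * (D⁻¹ / (c k + y₀)) = D⁻¹ * (1 - y₀ * (c k + y₀)⁻¹) := by
      intro k hk
      have hne : c k + y₀ ≠ 0 := ne_of_gt (hfac k hk)
      field_simp
      ring
    rw [Finset.sum_congr rfl this, ← Finset.mul_sum, Finset.sum_sub_distrib,
      ← Finset.mul_sum]
    simp [hSdef]
  rw [hsum2, hDeq]
  have hκne : κ₀ ≠ 0 := ne_of_gt hκ₀
  have hSne : S ≠ 0 := ne_of_gt hSpos
  field_simp
  ring
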